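/- Let ∇ be a Type B connection on M = (0,∞)×ℝ with Christoffel symbols Γ_{ij}^k = C_{ij}^k/x¹, and for σ ∈ {−1,0,1} let X(σ) = 2x¹x²∂₁ + ((x²)² + σ(x¹)²)∂₂. Then: (a) X(0) is an affine Killing field for ∇ if and only if C₁₁² = 0, C₁₁¹ = −3/2, C₁₂² = −1/2 and C₂₂² = 2C₁₂¹ (with C₁₂¹ and C₂₂¹ arbitrary); (b) X(1) is an affine Killing field for ∇ if and only if C₁₁¹ = −1, C₁₁² = 0, C₁₂¹ = 0, C₁₂² = −1, C₂₂¹ = −1, C₂₂² = 0; (c) X(−1) is an affine Killing field for ∇ if and only if C₁₁¹ = −1, C₁₁² = 0, C₁₂¹ = 0, C₁₂² = −1, C₂₂¹ = 1, C₂₂² = 0. -/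

import Mathlib

noncomputable section

/-- The coordinate directions of ℝ². -/
def ee : Fin 2 → ℝ × ℝ := ![(1, 0), (0, 1)]

/-- Partial derivative `∂_i f`. -/
def pd (i : Fin 2) (f : ℝ × ℝ → ℝ) : ℝ × ℝ → ℝ :=
  fun p => fderiv ℝ f p (ee i)

/-- Christoffel symbols `Γ_{ij}^k = C_{ij}^k / x¹` of a Type B connection on `(0,∞)×ℝ`. -/
def GammaB (C : Fin 2 → Fin 2 → Fin 2 → ℝ) (i j k : Fin 2) : ℝ × ℝ → ℝ :=
  fun p => C i j k / p.1

/-- Affine Killing vector field for a Type B connection on `M = (0,∞) × ℝ`. -/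
def IsKillingB (C : Fin 2 → Fin 2 → Fin 2 → ℝ) (X : Fin 2 → ℝ × ℝ → ℝ) : Prop :=
  ∀ i j k : Fin 2, ∀ p : ℝ × ℝ, 0 < p.1 →
    pd i (pd j (X k)) p
      + ∑ l, (X l p * pd l (GammaB C i j k) p + GammaB C l j k p * pd i (X l) p
          + GammaB C i l k p * pd j (X l) p - GammaB C i j l p * pd l (X k) p) = 0

/-- The vector field `X(σ) = 2x¹x²∂₁ + ((x²)² + σ(x¹)²)∂₂`. -/
def Xsigma (σ : ℝ) : Fin 2 → ℝ × ℝ → ℝ :=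
  ![fun p => 2 * p.1 * p.2, fun p => p.2 ^ 2 + σ * p.1 ^ 2]

lemma pd_of_hasFDerivAt {f : ℝ × ℝ → ℝ} {L : ℝ × ℝ →L[ℝ] ℝ} {p : ℝ × ℝ}
    (h : HasFDerivAt f L p) (i : Fin 2) : pd i f p = L (ee i) := by
  rw [pd, h.fderiv]

lemma hasF_sq_fst (p : ℝ × ℝ) :
    HasFDerivAt (fun p : ℝ × ℝ => p.1 ^ 2)
      ((2 * p.1) • ContinuousLinearMap.fst ℝ ℝ ℝ) p := by
  have := (hasDerivAt_pow 2 p.1).comp_hasFDerivAt (𝕜 := ℝ) p hasFDerivAt_fst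
  simpa [Function.comp_def] using this

lemma hasF_sq_snd (p : ℝ × ℝ) :
    HasFDerivAt (fun p : ℝ × ℝ => p.2 ^ 2)
      ((2 * p.2) • ContinuousLinearMap.snd ℝ ℝ ℝ) p := by
  have := (hasDerivAt_pow 2 p.2).comp_hasFDerivAt (𝕜 := ℝ) p hasFDerivAt_snd
  simpa [Function.comp_def] using this

lemma X0_eq (s : ℝ) : Xsigma s 0 = fun p => 2 * p.1 * p.2 := rfl
lemma X1_eq (s : ℝ) : Xsigma s 1 = fun p => p.2 ^ 2 + s * p.1 ^ 2 := rfl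
lemma X0_apply (s : ℝ) (p : ℝ × ℝ) : Xsigma s 0 p = 2 * p.1 * p.2 := rfl
lemma X1_apply (s : ℝ) (p : ℝ × ℝ) : Xsigma s 1 p = p.2 ^ 2 + s * p.1 ^ 2 := rfl
lemma ee0_1 : (ee 0).1 = 1 := rfl
lemma ee0_2 : (ee 0).2 = 0 := rfl
lemma ee1_1 : (ee 1).1 = 0 := rfl
lemma ee1_2 : (ee 1).2 = 1 := rfl

lemma pd0_X0 (s : ℝ) : pd 0 (Xsigma s 0) = fun p => 2 * p.2 := by
  funext p
  rw [X0_eq, pd_of_hasFDerivAt (f := fun p => 2 * p.1 * p.2) ((hasFDerivAt_fst.const_mul 2).mul hasFDerivAt_snd)]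
  show (2 * p.1) * (1, (0:ℝ)).2 + p.2 * (2 * (1, (0:ℝ)).1) = 2 * p.2
  norm_num
  ring

lemma pd1_X0 (s : ℝ) : pd 1 (Xsigma s 0) = fun p => 2 * p.1 := by
  funext p
  rw [X0_eq, pd_of_hasFDerivAt (f := fun p => 2 * p.1 * p.2) ((hasFDerivAt_fst.const_mul 2).mul hasFDerivAt_snd)]
  show (2 * p.1) * (0, (1:ℝ)).2 + p.2 * (2 * (0, (1:ℝ)).1) = 2 * p.1
  norm_num

lemma pd0_X1 (s : ℝ) : pd 0 (Xsigma s 1) = fun p => 2 * s * p.1 := by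
  funext p
  rw [X1_eq, pd_of_hasFDerivAt (f := fun p => p.2 ^ 2 + s * p.1 ^ 2) ((hasF_sq_snd p).add ((hasF_sq_fst p).const_mul s))]
  show (2 * p.2) * (1, (0:ℝ)).2 + s * ((2 * p.1) * (1, (0:ℝ)).1) = 2 * s * p.1
  norm_num; ring

lemma pd1_X1 (s : ℝ) : pd 1 (Xsigma s 1) = fun p => 2 * p.2 := by
  funext p
  rw [X1_eq, pd_of_hasFDerivAt (f := fun p => p.2 ^ 2 + s * p.1 ^ 2) ((hasF_sq_snd p).add ((hasF_sq_fst p).const_mul s))]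
  show (2 * p.2) * (0, (1:ℝ)).2 + s * ((2 * p.1) * (0, (1:ℝ)).1) = 2 * p.2
  norm_num

lemma pd_const_mul_fst (c : ℝ) (i : Fin 2) (p : ℝ × ℝ) :
    pd i (fun p : ℝ × ℝ => c * p.1) p = c * (ee i).1 := by
  rw [pd_of_hasFDerivAt (hasFDerivAt_fst.const_mul c)]
  simp

lemma pd_const_mul_snd (c : ℝ) (i : Fin 2) (p : ℝ × ℝ) :
    pd i (fun p : ℝ × ℝ => c * p.2) p = c * (ee i).2 := by
  rw [pd_of_hasFDerivAt (hasFDerivAt_snd.const_mul c)]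
  simp

lemma pd_Gamma (C : Fin 2 → Fin 2 → Fin 2 → ℝ) (i j k l : Fin 2) {p : ℝ × ℝ}
    (hp : p.1 ≠ 0) :
    pd l (GammaB C i j k) p = C i j k * (-(p.1 ^ 2)⁻¹) * (ee l).1 := by
  have h1 : HasDerivAt (fun t : ℝ => C i j k * t⁻¹) (C i j k * (-(p.1 ^ 2)⁻¹)) p.1 :=
    (hasDerivAt_inv hp).const_mul _
  have heq : GammaB C i j k = (fun t : ℝ => C i j k * t⁻¹) ∘ Prod.fst := by
    funext q; simp [GammaB, div_eq_mul_inv, Function.comp]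
  have h := h1.comp_hasFDerivAt (𝕜 := ℝ) p hasFDerivAt_fst
  rw [heq, pd_of_hasFDerivAt h]
  simp [mul_assoc]

/-- The reduced (constant) Killing expressions. -/
def EB (C : Fin 2 → Fin 2 → Fin 2 → ℝ) (s : ℝ) (i j k : Fin 2) : ℝ :=
  ![![![4 * C 0 1 0 * s - 2 * C 0 0 1,
        2 * s + 4 * C 0 1 1 * s - 2 * C 0 0 0 * s],
      ![2 + 2 * C 1 1 0 * s + 2 * C 0 0 0 - 2 * C 0 1 1,
        2 * C 1 1 1 * s + 2 * C 0 0 1 - 2 * C 0 1 0 * s]],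
    ![![2 + 2 * C 1 1 0 * s + 2 * C 0 0 0 - 2 * C 0 1 1,
        2 * C 1 1 1 * s + 2 * C 0 0 1 - 2 * C 0 1 0 * s],
      ![4 * C 0 1 0 - 2 * C 1 1 1,
        2 + 4 * C 0 1 1 - 2 * C 1 1 0 * s]]] i j k

lemma EB000 (C : Fin 2 → Fin 2 → Fin 2 → ℝ) (s : ℝ) : EB C s 0 0 0 = 4 * C 0 1 0 * s - 2 * C 0 0 1 := rfl
lemma EB001 (C : Fin 2 → Fin 2 → Fin 2 → ℝ) (s : ℝ) : EB C s 0 0 1 = 2 * s + 4 * C 0 1 1 * s - 2 * C 0 0 0 * s := rfl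
lemma EB010 (C : Fin 2 → Fin 2 → Fin 2 → ℝ) (s : ℝ) : EB C s 0 1 0 = 2 + 2 * C 1 1 0 * s + 2 * C 0 0 0 - 2 * C 0 1 1 := rfl
lemma EB011 (C : Fin 2 → Fin 2 → Fin 2 → ℝ) (s : ℝ) : EB C s 0 1 1 = 2 * C 1 1 1 * s + 2 * C 0 0 1 - 2 * C 0 1 0 * s := rfl
lemma EB100 (C : Fin 2 → Fin 2 → Fin 2 → ℝ) (s : ℝ) : EB C s 1 0 0 = 2 + 2 * C 1 1 0 * s + 2 * C 0 0 0 - 2 * C 0 1 1 := rfl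
lemma EB101 (C : Fin 2 → Fin 2 → Fin 2 → ℝ) (s : ℝ) : EB C s 1 0 1 = 2 * C 1 1 1 * s + 2 * C 0 0 1 - 2 * C 0 1 0 * s := rfl
lemma EB110 (C : Fin 2 → Fin 2 → Fin 2 → ℝ) (s : ℝ) : EB C s 1 1 0 = 4 * C 0 1 0 - 2 * C 1 1 1 := rfl
lemma EB111 (C : Fin 2 → Fin 2 → Fin 2 → ℝ) (s : ℝ) : EB C s 1 1 1 = 2 + 4 * C 0 1 1 - 2 * C 1 1 0 * s := rfl

set_option maxHeartbeats 1000000 in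
lemma key (C : Fin 2 → Fin 2 → Fin 2 → ℝ) (hC : ∀ i j k, C i j k = C j i k)
    (s : ℝ) {p : ℝ × ℝ} (hp : p.1 ≠ 0) : ∀ i j k : Fin 2,
    pd i (pd j (Xsigma s k)) p
      + ∑ l, (Xsigma s l p * pd l (GammaB C i j k) p
          + GammaB C l j k p * pd i (Xsigma s l) p
          + GammaB C i l k p * pd j (Xsigma s l) p
          - GammaB C i j l p * pd l (Xsigma s k) p)
      = EB C s i j k := by
  simp only [Fin.forall_fin_two]
  refine ⟨⟨⟨?_, ?_⟩, ?_, ?_⟩, ⟨?_, ?_⟩, ?_, ?_⟩ <;>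
  · simp only [Fin.isValue, Fin.sum_univ_two, pd0_X0, pd1_X0, pd0_X1, pd1_X1,
      pd_const_mul_fst, pd_const_mul_snd, pd_Gamma (p := p) (hp := hp),
      X0_apply, X1_apply, GammaB, hC 1 0, ee0_1, ee0_2, ee1_1, ee1_2,
      EB000, EB001, EB010, EB011, EB100, EB101, EB110, EB111]
    field_simp
    ring

lemma killing_iff (C : Fin 2 → Fin 2 → Fin 2 → ℝ) (hC : ∀ i j k, C i j k = C j i k)
    (s : ℝ) : IsKillingB C (Xsigma s) ↔ ∀ i j k, EB C s i j k = 0 := by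
  constructor
  · intro h i j k
    rw [← key C hC s (p := (1, 0)) (by norm_num) i j k]
    exact h i j k (1, 0) (by norm_num)
  · intro h i j k p hp
    rw [key C hC s hp.ne' i j k]
    exact h i j k

theorem stmt11 (C : Fin 2 → Fin 2 → Fin 2 → ℝ)
    (hC : ∀ i j k, C i j k = C j i k) :
    (IsKillingB C (Xsigma 0) ↔
      (C 0 0 1 = 0 ∧ C 0 0 0 = -(3 / 2) ∧ C 0 1 1 = -(1 / 2) ∧ C 1 1 1 = 2 * C 0 1 0)) ∧
    (IsKillingB C (Xsigma 1) ↔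
      (C 0 0 0 = -1 ∧ C 0 0 1 = 0 ∧ C 0 1 0 = 0 ∧ C 0 1 1 = -1 ∧
        C 1 1 0 = -1 ∧ C 1 1 1 = 0)) ∧
    (IsKillingB C (Xsigma (-1)) ↔
      (C 0 0 0 = -1 ∧ C 0 0 1 = 0 ∧ C 0 1 0 = 0 ∧ C 0 1 1 = -1 ∧
        C 1 1 0 = 1 ∧ C 1 1 1 = 0)) := by
  refine ⟨?_, ?_, ?_⟩ <;>
    rw [killing_iff C hC] <;>
    simp only [Fin.forall_fin_two, EB000, EB001, EB010, EB011, EB100, EB101, EB110, EB111]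
  · constructor
    · rintro ⟨⟨⟨h1, h2⟩, h3, h4⟩, ⟨h5, h6⟩, h7, h8⟩
      refine ⟨?_, ?_, ?_, ?_⟩ <;> linarith
    · rintro ⟨h1, h2, h3, h4⟩
      refine ⟨⟨⟨?_, ?_⟩, ?_, ?_⟩, ⟨?_, ?_⟩, ?_, ?_⟩ <;> linarith
  · constructor
    · rintro ⟨⟨⟨h1, h2⟩, h3, h4⟩, ⟨h5, h6⟩, h7, h8⟩
      refine ⟨?_, ?_, ?_, ?_, ?_, ?_⟩ <;> linarith
    · rintro ⟨h1, h2, h3, h4, h5, h6⟩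
      refine ⟨⟨⟨?_, ?_⟩, ?_, ?_⟩, ⟨?_, ?_⟩, ?_, ?_⟩ <;> linarith
  · constructor
    · rintro ⟨⟨⟨h1, h2⟩, h3, h4⟩, ⟨h5, h6⟩, h7, h8⟩
      refine ⟨?_, ?_, ?_, ?_, ?_, ?_⟩ <;> linarith
    · rintro ⟨h1, h2, h3, h4, h5, h6⟩
      refine ⟨⟨⟨?_, ?_⟩, ?_, ?_⟩, ⟨?_, ?_⟩, ?_, ?_⟩ <;> linarith
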